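/- Let (T_n) be an increasing sequence in (0,∞) with T_n → ∞ and (ε_n) a sequence of positive reals such that (1/T_n)·Σ_{k=1}^{n-1} ε_k T_{k+1} + ε_n → 0 as n → ∞. Let Z ⊆ [0,∞) be a measurable set such that for all n and all T ≥ T_n, (1/T)·Leb(Z ∩ [T_n, T_{n+1}] ∩ [0,T]) ≤ ε_n. Then Z has zero upper density: limsup_{T→∞} Leb(Z ∩ [0,T])/T = 0. -/

import Mathlib

open MeasureTheory Filter

theorem stmt3 (T : ℕ → ℝ) (hTmono : StrictMono T) (hTpos : ∀ n, 0 < T n)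
    (hTtop : Tendsto T atTop atTop)
    (ε : ℕ → ℝ) (hεpos : ∀ n, 0 < ε n)
    (hcomb : Tendsto
      (fun n => (∑ k ∈ Finset.range n, ε k * T (k + 1)) / T n + ε n) atTop (nhds 0))
    (Z : Set ℝ) (hZmeas : MeasurableSet Z) (hZsub : Z ⊆ Set.Ici 0)
    (hZ : ∀ n : ℕ, ∀ T' : ℝ, T n ≤ T' →
      (volume (Z ∩ Set.Icc (T n) (T (n + 1)) ∩ Set.Icc 0 T')).toReal ≤ ε n * T') :
    Filter.limsup (fun T' : ℝ => (volume (Z ∩ Set.Icc 0 T')).toReal / T') atTop = 0 := by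
  classical
  have key : ∀ n : ℕ, ∀ T' : ℝ, T n ≤ T' → T' ≤ T (n + 1) →
      (volume (Z ∩ Set.Icc 0 T')).toReal ≤
        T 0 + (∑ k ∈ Finset.range n, ε k * T (k + 1)) + ε n * T' := by
    intro n T' h1 h2
    have hfin : ∀ k : ℕ, volume (Z ∩ Set.Icc (T k) (T (k + 1)) ∩ Set.Icc 0 T') ≠ ⊤ :=
      fun k => ((measure_mono Set.inter_subset_right).trans_lt measure_Icc_lt_top).ne
    have hsub : Z ∩ Set.Icc 0 T' ⊆ Set.Icc 0 (T 0) ∪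
        ⋃ k ∈ Finset.range (n + 1), (Z ∩ Set.Icc (T k) (T (k + 1)) ∩ Set.Icc 0 T') := by
      rintro x ⟨hxZ, hx0, hxT⟩
      by_cases hx : x ≤ T 0
      · exact Or.inl ⟨hx0, hx⟩
      · push_neg at hx
        set k := Nat.findGreatest (fun k => T k ≤ x) n with hkdef
        have hk1 : T k ≤ x := by
          simpa using Nat.findGreatest_spec (P := fun k => T k ≤ x) (Nat.zero_le n) hx.le
        have hkn : k ≤ n := Nat.findGreatest_le n
        have hk2 : x ≤ T (k + 1) := by
          rcases eq_or_lt_of_le hkn with h | h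
          · rw [h]; exact hxT.trans h2
          · have := Nat.findGreatest_is_greatest (Nat.lt_succ_self k) h
            push_neg at this
            exact this.le
        exact Or.inr (Set.mem_biUnion (Finset.mem_range.mpr (Nat.lt_succ_of_le hkn))
          ⟨⟨hxZ, hk1, hk2⟩, hx0, hxT⟩)
    have hle : volume (Z ∩ Set.Icc 0 T') ≤ volume (Set.Icc (0:ℝ) (T 0)) +
        ∑ k ∈ Finset.range (n + 1), volume (Z ∩ Set.Icc (T k) (T (k + 1)) ∩ Set.Icc 0 T') := by
      refine (measure_mono hsub).trans ((measure_union_le _ _).trans ?_)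
      gcongr
      exact measure_biUnion_finset_le _ _
    have hterm : ∀ k : ℕ, k < n →
        volume (Z ∩ Set.Icc (T k) (T (k + 1)) ∩ Set.Icc 0 T') ≤
          ENNReal.ofReal (ε k * T (k + 1)) := by
      intro k hk
      rw [ENNReal.le_ofReal_iff_toReal_le (hfin k)
        (mul_nonneg (hεpos k).le (hTpos (k + 1)).le)]
      have hss : Z ∩ Set.Icc (T k) (T (k + 1)) ∩ Set.Icc 0 T' ⊆
          Z ∩ Set.Icc (T k) (T (k + 1)) ∩ Set.Icc 0 (T (k + 1)) := by
        rintro x ⟨⟨hz, hik⟩, hi0, _⟩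
        exact ⟨⟨hz, hik⟩, hi0, hik.2⟩
      refine le_trans ?_ (hZ k (T (k + 1)) (hTmono (Nat.lt_succ_self k)).le)
      exact ENNReal.toReal_mono
        (((measure_mono Set.inter_subset_right).trans_lt measure_Icc_lt_top).ne)
        (measure_mono hss)
    have hsumnn : 0 ≤ ∑ k ∈ Finset.range n, ε k * T (k + 1) :=
      Finset.sum_nonneg fun k _ => mul_nonneg (hεpos k).le (hTpos (k + 1)).le
    have htermn : volume (Z ∩ Set.Icc (T n) (T (n + 1)) ∩ Set.Icc 0 T') ≤
        ENNReal.ofReal (ε n * T') := by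
      rw [ENNReal.le_ofReal_iff_toReal_le (hfin n)
        (mul_nonneg (hεpos n).le ((hTpos n).le.trans h1))]
      exact hZ n T' h1
    have hle2 : volume (Z ∩ Set.Icc 0 T') ≤
        ENNReal.ofReal (T 0 + (∑ k ∈ Finset.range n, ε k * T (k + 1)) + ε n * T') := by
      refine hle.trans ?_
      rw [Finset.sum_range_succ]
      have h0 : volume (Set.Icc (0:ℝ) (T 0)) = ENNReal.ofReal (T 0) := by
        rw [Real.volume_Icc, sub_zero]
      rw [h0, ENNReal.ofReal_add (add_nonneg (hTpos 0).le hsumnn)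
          (mul_nonneg (hεpos n).le ((hTpos n).le.trans h1)),
        ENNReal.ofReal_add (hTpos 0).le
          (Finset.sum_nonneg fun k _ => mul_nonneg (hεpos k).le (hTpos (k + 1)).le),
        ENNReal.ofReal_sum_of_nonneg fun k _ => mul_nonneg (hεpos k).le (hTpos (k + 1)).le]
      refine le_trans (add_le_add le_rfl (add_le_add
        (Finset.sum_le_sum fun k hk => hterm k (Finset.mem_range.mp hk)) htermn)) ?_
      rw [add_assoc]
    exact ENNReal.toReal_le_of_le_ofReal (add_nonneg (add_nonneg (hTpos 0).le hsumnn)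
      (mul_nonneg (hεpos n).le ((hTpos n).le.trans h1))) hle2
  have htend : Tendsto (fun T' : ℝ => (volume (Z ∩ Set.Icc 0 T')).toReal / T') atTop (nhds 0) := by
    rw [Metric.tendsto_nhds]
    intro δ hδ
    rw [Metric.tendsto_nhds] at hcomb
    obtain ⟨N, hN⟩ := (hcomb (δ / 2) (by positivity)).exists_forall_of_atTop
    have hTN : 0 < T N := hTpos N
    filter_upwards [eventually_ge_atTop (T N), eventually_gt_atTop (2 * T 0 / δ),
      eventually_gt_atTop (0 : ℝ)] with T' hT1 hT2 hT3
    obtain ⟨b, hb⟩ := (hTtop.eventually_gt_atTop T').exists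
    have hNb : N < b := hTmono.lt_iff_lt.mp (lt_of_le_of_lt hT1 hb)
    set n := Nat.findGreatest (fun k => T k ≤ T') b with hndef
    have hNn : N ≤ n := Nat.le_findGreatest hNb.le hT1
    have hn1 : T n ≤ T' := by
      simpa using Nat.findGreatest_spec (P := fun k => T k ≤ T') hNb.le hT1
    have hnb : n < b := hTmono.lt_iff_lt.mp (lt_of_le_of_lt hn1 hb)
    have hn2 : T' < T (n + 1) := by
      have := Nat.findGreatest_is_greatest (Nat.lt_succ_self n) hnb
      push_neg at this
      exact this
    have hbound := key n T' hn1 hn2.le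
    have hTn : 0 < T n := hTpos n
    have hsum0 : 0 ≤ ∑ k ∈ Finset.range n, ε k * T (k + 1) :=
      Finset.sum_nonneg fun k _ => mul_nonneg (hεpos k).le (hTpos (k + 1)).le
    have hfle : (volume (Z ∩ Set.Icc 0 T')).toReal / T' ≤
        T 0 / T' + ((∑ k ∈ Finset.range n, ε k * T (k + 1)) / T n + ε n) := by
      have h1 : (volume (Z ∩ Set.Icc 0 T')).toReal / T' ≤
          (T 0 + (∑ k ∈ Finset.range n, ε k * T (k + 1)) + ε n * T') / T' := by
        gcongr
      refine h1.trans ?_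
      rw [add_div, add_div]
      have : ε n * T' / T' = ε n := by field_simp
      rw [this]
      have hs : (∑ k ∈ Finset.range n, ε k * T (k + 1)) / T' ≤
          (∑ k ∈ Finset.range n, ε k * T (k + 1)) / T n := by
        gcongr
      linarith
    have hf0 : 0 ≤ (volume (Z ∩ Set.Icc 0 T')).toReal / T' :=
      div_nonneg ENNReal.toReal_nonneg hT3.le
    rw [Real.dist_eq, sub_zero, abs_of_nonneg hf0]
    have hc := hN n hNn
    rw [Real.dist_eq, sub_zero] at hc
    have hc0 : 0 ≤ (∑ k ∈ Finset.range n, ε k * T (k + 1)) / T n + ε n :=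
      add_nonneg (div_nonneg hsum0 (hTpos n).le) (hεpos n).le
    rw [abs_of_nonneg hc0] at hc
    have hT0 : T 0 / T' < δ / 2 := by
      rw [div_lt_iff₀ hT3]
      rw [div_lt_iff₀ hδ] at hT2
      linarith
    linarith
  exact htend.limsup_eq
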